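/- Let t_0 < t_1 < ... < t_N be distinct real numbers, N ≥ 1, and let D be the trailing N×N submatrix of the Lagrange differentiation matrix (deleting the row and column indexed by t_0). Then det D = N! / ∏_{j=1}^N (t_j - t_0). -/

import Mathlib

open Finset Matrix

/-- The Lagrange differentiation matrix on nodes `t`. -/
noncomputable def lagrangeD {ι : Type*} [Fintype ι] [DecidableEq ι] (t : ι → ℝ) :
    Matrix ι ι ℝ :=
  Matrix.of fun j k =>
    if j = k then ∑ l ∈ Finset.univ.erase j, (t j - t l)⁻¹
    else (∏ l ∈ Finset.univ.erase j, (t j - t l)) /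
      ((t j - t k) * ∏ l ∈ Finset.univ.erase k, (t k - t l))


lemma derivative_finset_prod {ι : Type*} [DecidableEq ι] (s : Finset ι) (f : ι → Polynomial ℝ) :
    Polynomial.derivative (∏ i ∈ s, f i) =
      ∑ i ∈ s, (∏ j ∈ s.erase i, f j) * Polynomial.derivative (f i) := by
  rw [Finset.prod_eq_multiset_prod, Polynomial.derivative_prod]
  simp only [Finset.sum, Finset.prod, Finset.erase_val]

lemma eval_derivative_basis {ι : Type*} [Fintype ι] [DecidableEq ι] (t : ι → ℝ)
    (ht : Function.Injective t) (j k : ι) :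
    (Polynomial.derivative (Lagrange.basis Finset.univ t k)).eval (t j) = lagrangeD t j k := by
  have hsub : ∀ a b : ι, a ≠ b → t a - t b ≠ 0 := fun a b h =>
    sub_ne_zero_of_ne (fun e => h (ht e))
  rw [Lagrange.basis, derivative_finset_prod, Polynomial.eval_finset_sum]
  simp only [Lagrange.basisDivisor, Polynomial.derivative_mul, Polynomial.derivative_C,
    Polynomial.derivative_sub, Polynomial.derivative_X, zero_mul, sub_zero, mul_one,
    Polynomial.eval_mul, Polynomial.eval_prod, Polynomial.eval_C, Polynomial.eval_sub,
    Polynomial.eval_X]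
  by_cases hjk : j = k
  · subst hjk
    rw [lagrangeD, Matrix.of_apply, if_pos rfl]
    refine Finset.sum_congr rfl fun m hm => ?_
    have h1 : ∏ l ∈ (Finset.univ.erase j).erase m, ((t j - t l)⁻¹ * (t j - t l)) = 1 :=
      Finset.prod_eq_one fun l hl => inv_mul_cancel₀
        (hsub _ _ (Ne.symm (Finset.ne_of_mem_erase (Finset.mem_of_mem_erase hl))))
    rw [h1, one_mul]; simp
  · rw [lagrangeD, Matrix.of_apply, if_neg hjk]
    rw [Finset.sum_eq_single j]
    · have hjmem : j ∈ Finset.univ.erase k := Finset.mem_erase.2 ⟨hjk, Finset.mem_univ j⟩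
      rw [Finset.prod_mul_distrib, Finset.prod_inv_distrib]
      rw [← Finset.mul_prod_erase _ _ hjmem,
        ← Finset.mul_prod_erase _ (fun l => t j - t l)
          (Finset.mem_erase.2 ⟨fun e => hjk e.symm, Finset.mem_univ k⟩ :
            k ∈ Finset.univ.erase j),
        Finset.erase_right_comm]
      have hS : ∏ l ∈ (Finset.univ.erase j).erase k, (t k - t l) ≠ 0 := by
        refine Finset.prod_ne_zero_iff.2 fun l hl => hsub _ _ ?_
        exact Ne.symm (Finset.mem_erase.1 hl).1
      have h1 : t j - t k ≠ 0 := hsub _ _ hjk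
      have h2 : t k - t j ≠ 0 := hsub _ _ (Ne.symm hjk)
      erw [Polynomial.eval_add, Polynomial.eval_C]
      simp only [Polynomial.eval_zero]
      field_simp
      ring
    · intro m hm hmj
      have hjin : j ∈ (Finset.univ.erase k).erase m :=
        Finset.mem_erase.2 ⟨Ne.symm hmj, Finset.mem_erase.2 ⟨hjk, Finset.mem_univ j⟩⟩
      rw [Finset.prod_eq_zero hjin (by simp), zero_mul]
    · intro h
      exact absurd (Finset.mem_erase.2 ⟨hjk, Finset.mem_univ j⟩) h

lemma sum_lagrangeD_mul {ι : Type*} [Fintype ι] [DecidableEq ι] (t : ι → ℝ)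
    (ht : Function.Injective t) (p : Polynomial ℝ) (hp : p.degree < Fintype.card ι) (j : ι) :
    ∑ k, lagrangeD t j k * p.eval (t k) = (Polynomial.derivative p).eval (t j) := by
  have h := Lagrange.eq_interpolate (v := t) (s := Finset.univ) (f := p) ht.injOn
    (by simpa using hp)
  conv_rhs => rw [h]
  rw [Lagrange.interpolate_apply, map_sum, Polynomial.eval_finset_sum]
  refine Finset.sum_congr rfl fun k _ => ?_
  rw [Polynomial.derivative_C_mul, Polynomial.eval_mul, Polynomial.eval_C,
    eval_derivative_basis t ht j k, mul_comm]

lemma prod_cast_factorial (N : ℕ) : ∏ i ∈ Finset.range N, ((i : ℝ) + 1) = N.factorial := by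
  induction N with
  | zero => simp
  | succ n ih => rw [Finset.prod_range_succ, ih, Nat.factorial_succ]; push_cast; ring

/-- Determinant of the trailing block of the Lagrange differentiation matrix. -/
theorem stmt_8 (N : ℕ) (hN : 1 ≤ N) (t : Fin (N + 1) → ℝ) (ht : StrictMono t) :
    ((lagrangeD t).submatrix Fin.succ Fin.succ).det =
      (N.factorial : ℝ) / ∏ j : Fin N, (t j.succ - t 0) := by
  classical
  have htinj : Function.Injective t := ht.injective
  set v : Fin N → ℝ := fun i => t i.succ with hv
  set M : Matrix (Fin N) (Fin N) ℝ := (lagrangeD t).submatrix Fin.succ Fin.succ with hM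
  set V : Matrix (Fin N) (Fin N) ℝ := Matrix.vandermonde v with hV
  set d : Fin N → ℝ := fun i => t i.succ - t 0 with hd
  set p : Fin N → Polynomial ℝ :=
    fun k => (Polynomial.X - Polynomial.C (t 0)) * Polynomial.X ^ (k : ℕ) with hp
  set U : Matrix (Fin N) (Fin N) ℝ :=
    Matrix.of (fun m k : Fin N => (Polynomial.derivative (p k)).coeff m) with hU
  have hmonic : ∀ k : Fin N, (p k).Monic :=
    fun k => (Polynomial.monic_X_sub_C _).mul (Polynomial.monic_X_pow _)
  have hpdeg : ∀ k : Fin N, (p k).natDegree = (k : ℕ) + 1 := by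
    intro k
    rw [hp]
    rw [(Polynomial.monic_X_sub_C (t 0)).natDegree_mul (Polynomial.monic_X_pow _),
      Polynomial.natDegree_X_sub_C, Polynomial.natDegree_X_pow]
    omega
  have hderivdeg : ∀ k : Fin N, (Polynomial.derivative (p k)).natDegree ≤ (k : ℕ) := by
    intro k
    refine (Polynomial.natDegree_derivative_le _).trans ?_
    rw [hpdeg k]
    omega
  -- the key matrix identity
  have key : M * (Matrix.diagonal d * V) = V * U := by
    ext j k
    rw [← Matrix.mul_assoc]
    rw [Matrix.mul_apply, Matrix.mul_apply]
    have hLHS : ∀ i : Fin N, (M * Matrix.diagonal d) j i * V i k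
        = lagrangeD t j.succ i.succ * (p k).eval (t i.succ) := by
      intro i
      rw [Matrix.mul_diagonal]
      simp only [hM, Matrix.submatrix_apply, hV, Matrix.vandermonde]
      rw [hp]
      simp only [Polynomial.eval_mul, Polynomial.eval_pow, Polynomial.eval_sub,
        Polynomial.eval_X, Polynomial.eval_C, Matrix.of_apply]
      ring
    rw [Finset.sum_congr rfl (fun i _ => hLHS i)]
    have hext : ∑ i : Fin N, lagrangeD t j.succ i.succ * (p k).eval (t i.succ)
        = ∑ i : Fin (N + 1), lagrangeD t j.succ i * (p k).eval (t i) := by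
      rw [Fin.sum_univ_succ]
      have : (p k).eval (t 0) = 0 := by simp [hp]
      rw [this, mul_zero, zero_add]
    rw [hext, sum_lagrangeD_mul t htinj (p k) ?deg j.succ]
    case deg =>
      rw [Fintype.card_fin]
      refine lt_of_le_of_lt (Polynomial.degree_le_natDegree) ?_
      rw [hpdeg k]
      exact_mod_cast Nat.succ_lt_succ k.isLt
    -- RHS : ∑ m, V j m * U m k = eval
    have : ∀ m : Fin N, V j m * U m k
        = (Polynomial.derivative (p k)).coeff m * (v j) ^ (m : ℕ) := by
      intro m
      simp only [hV, Matrix.vandermonde, hU, Matrix.of_apply]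
      ring
    rw [Finset.sum_congr rfl (fun m _ => this m)]
    rw [Polynomial.eval_eq_sum_range' (lt_of_le_of_lt (hderivdeg k) k.isLt) (v j),
      ← Fin.sum_univ_eq_sum_range]
  -- determinants
  have hdetU : U.det = (N.factorial : ℝ) := by
    rw [Matrix.det_of_upperTriangular (M := U) ?tri]
    case tri =>
      intro i j hij
      simp only [hU, Matrix.of_apply]
      exact Polynomial.coeff_eq_zero_of_natDegree_lt (lt_of_le_of_lt (hderivdeg j) hij)
    have hdiag : ∀ k : Fin N, U k k = (k : ℝ) + 1 := by
      intro k
      simp only [hU, Matrix.of_apply, Polynomial.coeff_derivative]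
      have : (p k).coeff ((k : ℕ) + 1) = 1 := by
        have := (hmonic k).coeff_natDegree
        rwa [hpdeg k] at this
      rw [this, one_mul]
    rw [Finset.prod_congr rfl (fun k _ => hdiag k), ← prod_cast_factorial N,
      ← Fin.prod_univ_eq_prod_range]
  have hdpos : ∀ i : Fin N, 0 < d i := fun i => sub_pos.2 (ht (Fin.succ_pos i))
  have hdprod : 0 < ∏ i : Fin N, d i := Finset.prod_pos fun i _ => hdpos i
  have hVdet : V.det ≠ 0 := by
    rw [hV, Matrix.det_vandermonde_ne_zero_iff]
    exact htinj.comp (Fin.succ_injective N)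
  have hdets := congrArg Matrix.det key
  rw [Matrix.det_mul, Matrix.det_mul, Matrix.det_mul, Matrix.det_diagonal, hdetU] at hdets
  have hprodne : ∏ i : Fin N, d i ≠ 0 := ne_of_gt hdprod
  have h2 : (M.det * ∏ i : Fin N, d i) * V.det = (N.factorial : ℝ) * V.det := by
    linear_combination hdets
  have h3 := mul_right_cancel₀ hVdet h2
  rw [eq_div_iff hprodne]
  linear_combination h3
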